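/- Let x ∈ [1/2, 1] and suppose ϑ = (ϑ_1, ϑ_2, …) ∈ 𝒮 and θ = (θ_1, θ_2, …) ∈ 𝒮 are two distinct sequences with ϑ_1 = θ_1 = x. Then K(ϑ) = K(θ), R(ϑ) = R(θ), and H(ϑ; s) = H(θ; s) for every s > −1. -/

import Mathlib

open Filter Topology

noncomputable section

namespace GreedyEnergy

/-- Decreasing list `n₁ > n₂ > ⋯ > n_p` of the binary exponents of `N`,
so that `N = 2^{n₁} + ⋯ + 2^{n_p}` with `n₁ > n₂ > ⋯ > n_p ≥ 0`. -/
def binExps (N : ℕ) : List ℕ :=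
  ((List.range (N + 1)).filter fun i => N.testBit i).reverse

/-- The number `p = τ_b(N)` of ones in the binary expansion of `N`. -/
def pbin (N : ℕ) : ℕ := (binExps N).length

/-- `η(N)` viewed as an infinite sequence (0-indexed): the entry of index `k`
is `θ_{k+1} = 2^{n_{k+1}}/N` for `k < p`, and `0` for `k ≥ p`. -/
def eta (N : ℕ) : ℕ → ℝ :=
  fun k => ((binExps N).map fun n => (2 : ℝ) ^ n / (N : ℝ)).getD k 0

/-- `H(θ; s)` for a finite vector of length `p` given (0-indexed) by `θ : ℕ → ℝ`:
`H(θ;s) = Σ_{k=1}^p θ_k^{s+1} + 2(2^s − 1) Σ_{k=1}^{p−1} θ_k^s Σ_{j=k+1}^p θ_j`. -/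
def Hvec (θ : ℕ → ℝ) (p : ℕ) (s : ℝ) : ℝ :=
  (∑ k ∈ Finset.range p, θ k ^ (s + 1)) +
    2 * ((2 : ℝ) ^ s - 1) *
      ∑ k ∈ Finset.range p, θ k ^ s * ∑ j ∈ Finset.Ico (k + 1) p, θ j

/-- `K(θ) = 2 log 2 + Σ_{k=1}^p θ_k² log(θ_k/4) + 2 Σ_{k=1}^{p−1} (Σ_{j=k+1}^p θ_j) θ_k log θ_k`. -/
def Kvec (θ : ℕ → ℝ) (p : ℕ) : ℝ :=
  2 * Real.log 2 + (∑ k ∈ Finset.range p, θ k ^ 2 * Real.log (θ k / 4)) +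
    2 * ∑ k ∈ Finset.range p, (∑ j ∈ Finset.Ico (k + 1) p, θ j) * (θ k * Real.log (θ k))

/-- `R(θ) = −(2 log 2) Σ_{k=1}^p (k−1) θ_k − Σ_{k=1}^p θ_k log θ_k` (0-indexed: `k−1 ↦ k`). -/
def Rvec (θ : ℕ → ℝ) (p : ℕ) : ℝ :=
  -(2 * Real.log 2) * (∑ k ∈ Finset.range p, (k : ℝ) * θ k) -
    ∑ k ∈ Finset.range p, θ k * Real.log (θ k)

/-- `G(θ; s) = Σ_{k=1}^p θ_k^s`. -/
def Gvec (θ : ℕ → ℝ) (p : ℕ) (s : ℝ) : ℝ := ∑ k ∈ Finset.range p, θ k ^ s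

/-- `Λ(θ) = Σ_{k=1}^p θ_k log θ_k`. -/
def Λvec (θ : ℕ → ℝ) (p : ℕ) : ℝ := ∑ k ∈ Finset.range p, θ k * Real.log (θ k)

/-- `H(η(N); s)`. -/
def Heta (N : ℕ) (s : ℝ) : ℝ := Hvec (eta N) (pbin N) s

/-- `K(η(N))`. -/
def Keta (N : ℕ) : ℝ := Kvec (eta N) (pbin N)

/-- `R(η(N))`. -/
def Reta (N : ℕ) : ℝ := Rvec (eta N) (pbin N)

/-- `G(η(N); s)`. -/
def Geta (N : ℕ) (s : ℝ) : ℝ := Gvec (eta N) (pbin N) s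

/-- `Λ(η(N))`. -/
def Λeta (N : ℕ) : ℝ := Λvec (eta N) (pbin N)

/-- The set `𝒮` of infinite sequences `ϑ` for which there is a strictly increasing
sequence of positive integers `N_m` with `ϑ_j = lim_m (η(N_m))_j` for every `j`. -/
def Sset : Set (ℕ → ℝ) :=
  {ϑ | ∃ Nm : ℕ → ℕ, StrictMono Nm ∧ (∀ m, 1 ≤ Nm m) ∧
        ∀ j, Tendsto (fun m => eta (Nm m) j) atTop (𝓝 (ϑ j))}

/-- `H(ϑ; s)` for an infinite sequence `ϑ` (0-indexed). The conventions
`ϑ_n log ϑ_n = 0` and `ϑ_n^s ϑ_j = 0` when `ϑ_n = 0` hold automatically,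
since `Real.log 0 = 0` and `(0:ℝ) ^ s = 0` for `s ≠ 0` (and the factor
`2^s − 1` vanishes when `s = 0`). -/
def Hinf (ϑ : ℕ → ℝ) (s : ℝ) : ℝ :=
  (∑' n : ℕ, ϑ n ^ (s + 1)) +
    2 * ((2 : ℝ) ^ s - 1) * ∑' n : ℕ, ϑ n ^ s * ∑' j : ℕ, ϑ (n + 1 + j)

/-- `K(ϑ)` for an infinite sequence `ϑ`. -/
def Kinf (ϑ : ℕ → ℝ) : ℝ :=
  2 * Real.log 2 + (∑' n : ℕ, ϑ n ^ 2 * Real.log (ϑ n / 4)) +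
    2 * ∑' n : ℕ, (∑' j : ℕ, ϑ (n + 1 + j)) * (ϑ n * Real.log (ϑ n))

/-- `R(ϑ)` for an infinite sequence `ϑ` (0-indexed: `n−1 ↦ n`). -/
def Rinf (ϑ : ℕ → ℝ) : ℝ :=
  -(2 * Real.log 2) * (∑' n : ℕ, (n : ℝ) * ϑ n) - ∑' n : ℕ, ϑ n * Real.log (ϑ n)

/-- The set of limit points of a real sequence: values of convergent subsequences. -/
def limitPoints (x : ℕ → ℝ) : Set ℝ :=
  {L | ∃ φ : ℕ → ℕ, StrictMono φ ∧ Tendsto (fun m => x (φ m)) atTop (𝓝 L)}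

/-- The Riesz `s`-kernel: `k_s(z,w) = |z−w|^{−s}` for `s ≠ 0`, `k_0(z,w) = −log|z−w|`. -/
def kernel (s : ℝ) (z w : ℂ) : ℝ :=
  if s = 0 then -Real.log ‖z - w‖ else ‖z - w‖ ^ (-s)

/-- The Riesz `s`-energy `E_s(a_0, …, a_{N−1}) = Σ_{i ≠ j} k_s(a_i, a_j)`. -/
def energy (s : ℝ) (a : ℕ → ℂ) (N : ℕ) : ℝ :=
  ∑ i ∈ Finset.range N, ∑ j ∈ Finset.range N,
    if i ≠ j then kernel s (a i) (a j) else 0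

/-- The potential `U_{N,s}(z) = Σ_{ℓ=0}^{N−1} k_s(z, a_ℓ)`. -/
def pot (s : ℝ) (a : ℕ → ℂ) (N : ℕ) (z : ℂ) : ℝ :=
  ∑ l ∈ Finset.range N, kernel s z (a l)

/-- A greedy `s`-energy sequence on the unit circle: all points lie on `S¹`, and for
every `N ≥ 1` the point `a_N` minimizes (if `s ≥ 0`) resp. maximizes (if `s < 0`)
the potential `U_{N,s}` over `S¹`. -/
def IsGreedy (s : ℝ) (a : ℕ → ℂ) : Prop :=
  (∀ n, ‖a n‖ = 1) ∧
    ∀ N, 1 ≤ N →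
      ((0 ≤ s → ∀ z : ℂ, ‖z‖ = 1 → pot s a N (a N) ≤ pot s a N z) ∧
        (s < 0 → ∀ z : ℂ, ‖z‖ = 1 → pot s a N z ≤ pot s a N (a N)))

/-- `I_s(σ) = 2^{−s} Γ((1−s)/2) / (√π Γ(1 − s/2))`. -/
def Isigma (s : ℝ) : ℝ :=
  (2 : ℝ) ^ (-s) / Real.sqrt Real.pi * (Real.Gamma ((1 - s) / 2) / Real.Gamma (1 - s / 2))

/-- The value `ζ(s)` of the Riemann zeta function at a real `s` (real part of the
analytically continued zeta function). -/
def zetaR (s : ℝ) : ℝ := (riemannZeta (s : ℂ)).re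



section Aux

lemma binExps_pairwise (N : ℕ) : (binExps N).Pairwise (· > ·) := by
  rw [binExps, List.pairwise_reverse]
  exact List.pairwise_lt_range.filter _

lemma sum_filter_testBit (N : ℕ) : ∀ n : ℕ,
    ((((List.range n).filter (fun i => N.testBit i)).map (fun i => 2 ^ i)).sum) = N % 2 ^ n := by
  intro n
  induction n with
  | zero => simp [Nat.mod_one]
  | succ n ih =>
    rw [List.range_succ, List.filter_append, List.map_append, List.sum_append, ih]
    have h2 : N % 2 ^ (n+1) = N % 2 ^ n + 2 ^ n * (N / 2 ^ n % 2) := by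
      rw [pow_succ, Nat.mod_mul]
    have hbit : N.testBit n = decide (N / 2 ^ n % 2 = 1) := by
      rw [Nat.testBit_eq_decide_div_mod_eq]
    by_cases h : N.testBit n
    · have : N / 2 ^ n % 2 = 1 := by simpa [hbit] using h
      simp [h, h2, this]
    · have : ¬ (N / 2 ^ n % 2 = 1) := by simpa [hbit] using h
      have h0 : N / 2 ^ n % 2 = 0 := by omega
      simp [h, h2, h0]

lemma binExps_sum (N : ℕ) : (((binExps N).map fun i => 2 ^ i).sum) = N := by
  rw [binExps, List.map_reverse, List.sum_reverse, sum_filter_testBit]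
  exact Nat.mod_eq_of_lt (lt_of_lt_of_le (Nat.lt_two_pow_self (n := N)) (Nat.pow_le_pow_right (by norm_num) (by omega)))


lemma eta_eq_getElem (N k : ℕ) (h : k < pbin N) :
    eta N k = (2:ℝ)^((binExps N)[k]) / N := by
  simp [eta, List.getD_eq_getElem?_getD, List.getElem?_eq_getElem (by simpa [pbin] using h : k < (binExps N).length)]

lemma eta_eq_zero (N k : ℕ) (h : pbin N ≤ k) : eta N k = 0 := by
  simp [eta, List.getD_eq_getElem?_getD, List.getElem?_eq_none (by simpa [pbin] using h : (binExps N).length ≤ k)]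

lemma eta_nonneg (N k : ℕ) : 0 ≤ eta N k := by
  by_cases h : k < pbin N
  · rw [eta_eq_getElem N k h]; positivity
  · rw [eta_eq_zero N k (le_of_not_gt h)]

lemma eta_pos (N k : ℕ) (hN : 1 ≤ N) (h : k < pbin N) : 0 < eta N k := by
  rw [eta_eq_getElem N k h]
  have : (0:ℝ) < N := by exact_mod_cast hN
  positivity

lemma eta_succ_le (N k : ℕ) (hN : 1 ≤ N) : eta N (k+1) ≤ eta N k / 2 := by
  by_cases h : k + 1 < pbin N
  · have hk : k < pbin N := by omega
    rw [eta_eq_getElem N _ h, eta_eq_getElem N k hk]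
    have hlt : (binExps N)[k+1] < (binExps N)[k] := by
      have := (List.pairwise_iff_getElem).1 (binExps_pairwise N)
        k (k+1) (by simpa [pbin] using hk) (by simpa [pbin] using h) (by omega)
      exact this
    have hN' : (0:ℝ) < N := by exact_mod_cast hN
    have h2 : (2:ℝ)^((binExps N)[k+1]) * 2 ≤ 2^((binExps N)[k]) := by
      rw [mul_comm, ← pow_succ']
      exact pow_le_pow_right₀ (by norm_num) hlt
    rw [div_div, div_le_div_iff₀ hN' (by positivity)]
    nlinarith [h2, hN'.le]
  · rw [eta_eq_zero N _ (le_of_not_gt h)]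
    have := eta_nonneg N k; linarith



lemma sum_map_pow_real (l : List ℕ) :
    ((l.map fun i => (2:ℝ)^i).sum) = (((l.map fun i => 2^i).sum : ℕ) : ℝ) := by
  induction l with
  | nil => simp
  | cons a tl ih => push_cast [List.map_cons, List.sum_cons, ih]; ring

def Dtail (N j : ℕ) : ℝ := (((binExps N).drop j).map fun i => (2:ℝ)^i).sum / N

lemma Dtail_nonneg (N j : ℕ) : 0 ≤ Dtail N j := by
  apply div_nonneg _ (Nat.cast_nonneg N)
  apply List.sum_nonneg
  intro x hx
  simp only [List.mem_map] at hx
  obtain ⟨i, _, rfl⟩ := hx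
  positivity

lemma PS_add_D (N : ℕ) (hN : 1 ≤ N) (j : ℕ) :
    ∑ k ∈ Finset.range j, eta N k + Dtail N j = 1 := by
  have hN' : (0:ℝ) < N := by exact_mod_cast hN
  induction j with
  | zero =>
    simp only [Finset.range_zero, Finset.sum_empty, zero_add, Dtail, List.drop_zero]
    rw [sum_map_pow_real, binExps_sum, div_self hN'.ne']
  | succ j ih =>
    rw [Finset.sum_range_succ]
    have key : eta N j + Dtail N (j+1) = Dtail N j := by
      by_cases h : j < pbin N
      · have hd : (binExps N).drop j = (binExps N)[j] :: (binExps N).drop (j+1) :=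
          List.drop_eq_getElem_cons (by simpa [pbin] using h)
      
        rw [eta_eq_getElem N j h, Dtail, Dtail, hd]
        simp only [List.map_cons, List.sum_cons]
        rw [add_div]
      · have h1 : (binExps N).length ≤ j := by simpa [pbin] using le_of_not_gt h
        rw [eta_eq_zero N j (le_of_not_gt h), Dtail, Dtail, List.drop_eq_nil_of_le h1,
          List.drop_eq_nil_of_le (by omega)]
        simp
    linarith [ih]

lemma partial_sum_le_one (N : ℕ) (hN : 1 ≤ N) (j : ℕ) :
    ∑ k ∈ Finset.range j, eta N k ≤ 1 := by
  have := PS_add_D N hN j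
  have := Dtail_nonneg N j
  linarith

lemma sum_pow_lt (l : List ℕ) (h : l.Pairwise (· > ·)) :
    (l.map fun i => 2^i).sum < 2^(l.headD 0 + 1) := by
  induction l with
  | nil => simp
  | cons a tl ih =>
    simp only [List.map_cons, List.sum_cons, List.headD_cons]
    have htl : (tl.map fun i => 2^i).sum < 2^a := by
      cases tl with
      | nil => simpa using Nat.pos_pow_of_pos a (by norm_num : 0 < 2)
      | cons b tb =>
        have hba : b < a := (List.pairwise_cons.1 h).1 b (by simp)
        have := ih (List.pairwise_cons.1 h).2
        calc ((b :: tb).map fun i => 2^i).sum < 2^((b :: tb).headD 0 + 1) := this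
          _ ≤ 2^a := Nat.pow_le_pow_right (by norm_num) (by simpa using hba)
    have : (2:ℕ)^(a+1) = 2^a + 2^a := by ring
    omega

lemma tail_le (N : ℕ) (hN : 1 ≤ N) (j : ℕ) :
    1 - ∑ k ∈ Finset.range (j+1), eta N k ≤ 2 * eta N (j+1) := by
  have hN' : (0:ℝ) < N := by exact_mod_cast hN
  have hkey := PS_add_D N hN (j+1)
  by_cases h : j + 1 < pbin N
  · have hlen : j + 1 < (binExps N).length := by simpa [pbin] using h
    have hd : (binExps N).drop (j+1) = (binExps N)[j+1] :: (binExps N).drop (j+2) :=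
      List.drop_eq_getElem_cons hlen
    have hpw : ((binExps N).drop (j+1)).Pairwise (· > ·) :=
      (binExps_pairwise N).sublist (List.drop_sublist _ _)
    have hsum := sum_pow_lt _ hpw
    have hhead : ((binExps N).drop (j+1)).headD 0 = (binExps N)[j+1] := by rw [hd]; rfl
    rw [hhead] at hsum
    have hr : (((binExps N).drop (j+1)).map fun i => (2:ℝ)^i).sum
        ≤ 2 * (2:ℝ)^((binExps N)[j+1]) := by
      rw [sum_map_pow_real]
      have h1 := (Nat.cast_le (α := ℝ)).2 hsum.le
      refine h1.trans (le_of_eq ?_)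
      push_cast [pow_succ]
      ring
    have : Dtail N (j+1) ≤ 2 * eta N (j+1) := by
      rw [Dtail, eta_eq_getElem N _ h, div_le_iff₀ hN']
      calc (((binExps N).drop (j+1)).map fun i => (2:ℝ)^i).sum
          ≤ 2 * (2:ℝ)^((binExps N)[j+1]) := hr
        _ = 2 * ((2:ℝ)^((binExps N)[j+1]) / N) * N := by field_simp
    linarith
  · have h1 : (binExps N).length ≤ j + 1 := by simpa [pbin] using le_of_not_gt h
    have : Dtail N (j+1) = 0 := by
      rw [Dtail, List.drop_eq_nil_of_le h1]; simp
    rw [eta_eq_zero N _ (le_of_not_gt h)]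
    linarith

lemma eta_dyadic (N k : ℕ) (hN : 1 ≤ N) :
    eta N k = 0 ∨ ∃ d : ℕ, eta N k = eta N 0 * (1/2:ℝ)^d := by
  by_cases h : k < pbin N
  · right
    have h0 : 0 < pbin N := by omega
    have hle : (binExps N)[k] ≤ (binExps N)[0] := by
      rcases Nat.eq_zero_or_pos k with rfl | hk
      · exact le_refl _
      · exact le_of_lt ((List.pairwise_iff_getElem).1 (binExps_pairwise N) 0 k
          (by simpa [pbin] using h0) (by simpa [pbin] using h) hk)
    refine ⟨(binExps N)[0] - (binExps N)[k], ?_⟩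
    rw [eta_eq_getElem N k h, eta_eq_getElem N 0 h0]
    rw [div_mul_eq_mul_div]
    congr 1
    rw [one_div, inv_pow, ← pow_sub₀ (2:ℝ) two_ne_zero (Nat.sub_le _ _)]
    congr 1
    omega
  · left; exact eta_eq_zero N k (le_of_not_gt h)


variable {ϑ : ℕ → ℝ}

lemma Sset.nonneg (hϑ : ϑ ∈ Sset) (j : ℕ) : 0 ≤ ϑ j := by
  obtain ⟨Nm, -, -, h⟩ := hϑ
  exact ge_of_tendsto' (h j) (fun m => eta_nonneg _ _)

lemma Sset.succ_le (hϑ : ϑ ∈ Sset) (j : ℕ) : ϑ (j+1) ≤ ϑ j / 2 := by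
  obtain ⟨Nm, -, h1, h⟩ := hϑ
  exact le_of_tendsto_of_tendsto' (h (j+1)) ((h j).div_const 2)
    (fun m => eta_succ_le _ _ (h1 m))

lemma Sset.psum_le_one (hϑ : ϑ ∈ Sset) (j : ℕ) : ∑ k ∈ Finset.range j, ϑ k ≤ 1 := by
  obtain ⟨Nm, -, h1, h⟩ := hϑ
  have ht : Tendsto (fun m => ∑ k ∈ Finset.range j, eta (Nm m) k) atTop
      (𝓝 (∑ k ∈ Finset.range j, ϑ k)) := tendsto_finset_sum _ (fun k _ => h k)
  exact le_of_tendsto' ht (fun m => partial_sum_le_one _ (h1 m) j)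

lemma Sset.tail_le (hϑ : ϑ ∈ Sset) (j : ℕ) :
    1 - ∑ k ∈ Finset.range (j+1), ϑ k ≤ 2 * ϑ (j+1) := by
  obtain ⟨Nm, -, h1, h⟩ := hϑ
  have ht : Tendsto (fun m => 1 - ∑ k ∈ Finset.range (j+1), eta (Nm m) k) atTop
      (𝓝 (1 - ∑ k ∈ Finset.range (j+1), ϑ k)) :=
    tendsto_const_nhds.sub (tendsto_finset_sum _ (fun k _ => h k))
  exact le_of_tendsto_of_tendsto' ht ((h (j+1)).const_mul 2)
    (fun m => GreedyEnergy.tail_le _ (h1 m) j)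

lemma half_pow_eq_of_close {γ : ℝ} (hγ : 0 < γ) {a b : ℕ}
    (ha1 : 2*γ/3 < (1/2:ℝ)^a) (ha2 : (1/2:ℝ)^a < 4*γ/3)
    (hb1 : 2*γ/3 < (1/2:ℝ)^b) (hb2 : (1/2:ℝ)^b < 4*γ/3) : a = b := by
  rcases lt_trichotomy a b with hab | hab | hab
  · exfalso
    have : (1/2:ℝ)^b ≤ (1/2:ℝ)^(a+1) :=
      pow_le_pow_of_le_one (by norm_num) (by norm_num) (by omega)
    rw [pow_succ] at this
    linarith
  · exact hab
  · exfalso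
    have : (1/2:ℝ)^a ≤ (1/2:ℝ)^(b+1) :=
      pow_le_pow_of_le_one (by norm_num) (by norm_num) (by omega)
    rw [pow_succ] at this
    linarith

lemma Sset.dyadic (hϑ : ϑ ∈ Sset) (hx : (1/2:ℝ) ≤ ϑ 0) (j : ℕ) :
    ϑ j = 0 ∨ ∃ d : ℕ, ϑ j = ϑ 0 * (1/2:ℝ)^d := by
  have hnn := Sset.nonneg hϑ j
  obtain ⟨Nm, -, h1, h⟩ := hϑ
  rcases eq_or_lt_of_le hnn with h0 | hpos
  · exact Or.inl h0.symm
  right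
  have hx0 : (0:ℝ) < ϑ 0 := by linarith
  set γ : ℝ := ϑ j / ϑ 0 with hγdef
  have hγ : 0 < γ := div_pos hpos hx0
  -- the ratio sequence
  have hr : Tendsto (fun m => eta (Nm m) j / eta (Nm m) 0) atTop (𝓝 γ) :=
    (h j).div (h 0) hx0.ne'
  have hev : ∀ᶠ m in atTop, |eta (Nm m) j / eta (Nm m) 0 - γ| < γ/3 := by
    have := Metric.tendsto_atTop.1 hr (γ/3) (by linarith)
    obtain ⟨m0, hm0⟩ := this
    exact eventually_atTop.2 ⟨m0, fun m hm => by simpa [Real.dist_eq] using hm0 m hm⟩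
  obtain ⟨m0, hm0⟩ := eventually_atTop.1 hev
  -- each ratio is 0 or a power of 1/2
  have hform : ∀ m, m0 ≤ m → ∃ d : ℕ, eta (Nm m) j / eta (Nm m) 0 = (1/2:ℝ)^d := by
    intro m hm
    rcases eta_dyadic (Nm m) j (h1 m) with hz | ⟨d, hd⟩
    · exfalso
      have := hm0 m hm
      rw [hz, zero_div] at this
      rw [abs_sub_comm, abs_of_nonneg (by linarith)] at this
      linarith
    · refine ⟨d, ?_⟩
      have he0 : eta (Nm m) 0 ≠ 0 := by
        intro hzero
        rw [hzero, mul_comm, mul_zero] at hd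
        have := hm0 m hm
        rw [hd, zero_div, abs_sub_comm, abs_of_nonneg (by linarith)] at this
        linarith
      rw [hd, mul_comm, mul_div_assoc, div_self he0, mul_one]
  obtain ⟨d0, hd0⟩ := hform m0 le_rfl
  have hconst : ∀ m, m0 ≤ m → eta (Nm m) j / eta (Nm m) 0 = (1/2:ℝ)^d0 := by
    intro m hm
    obtain ⟨d, hd⟩ := hform m hm
    have h2 := hm0 m hm
    have h3 := hm0 m0 le_rfl
    rw [hd] at h2
    rw [hd0] at h3
    rw [abs_lt] at h2 h3
    have : d = d0 := half_pow_eq_of_close hγ (by linarith) (by linarith) (by linarith) (by linarith)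
    rw [hd, this]
  have : γ = (1/2:ℝ)^d0 := by
    refine tendsto_nhds_unique (hr.congr' ?_) tendsto_const_nhds
    exact eventually_atTop.2 ⟨m0, hconst⟩
  refine ⟨d0, ?_⟩
  rw [← this, hγdef]
  field_simp


lemma structure_lemma (ϑ θ : ℕ → ℝ)
    (hϑn : ∀ j, 0 ≤ ϑ j) (hϑs : ∀ j, ϑ (j+1) ≤ ϑ j / 2)
    (hϑ1 : ∀ j, ∑ k ∈ Finset.range j, ϑ k ≤ 1)
    (hϑt : ∀ j, 1 - ∑ k ∈ Finset.range (j+1), ϑ k ≤ 2 * ϑ (j+1))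
    (hϑd : ∀ j, ϑ j = 0 ∨ ∃ d : ℕ, ϑ j = ϑ 0 * (1/2:ℝ)^d)
    (hθn : ∀ j, 0 ≤ θ j) (hθs : ∀ j, θ (j+1) ≤ θ j / 2)
    (hθ1 : ∀ j, ∑ k ∈ Finset.range j, θ k ≤ 1)
    (hθt : ∀ j, 1 - ∑ k ∈ Finset.range (j+1), θ k ≤ 2 * θ (j+1))
    (hθd : ∀ j, θ j = 0 ∨ ∃ d : ℕ, θ j = θ 0 * (1/2:ℝ)^d)
    (hx : (1/2:ℝ) ≤ ϑ 0) (h00 : ϑ 0 = θ 0)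
    (p : ℕ) (hp : 1 ≤ p) (hpre : ∀ k, k < p → ϑ k = θ k) (hdiff : θ p < ϑ p) :
    (∀ j, ϑ (p+1+j) = 0) ∧ (∀ j, θ (p+j) = ϑ p / 2^(j+1)) := by
  have hx0 : (0:ℝ) < ϑ 0 := by linarith
  set S : ℝ := ∑ k ∈ Finset.range p, ϑ k with hS
  have hSθ : ∑ k ∈ Finset.range p, θ k = S :=
    (Finset.sum_congr rfl (fun k hk => (hpre k (Finset.mem_range.1 hk)).symm))
  -- ϑ p ≤ 1 - S
  have hϑpT : ϑ p ≤ 1 - S := by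
    have := hϑ1 (p+1)
    rw [Finset.sum_range_succ] at this
    linarith
  -- 1 - S ≤ 2 θ p
  have hTθp : 1 - S ≤ 2 * θ p := by
    obtain ⟨q, rfl⟩ : ∃ q, p = q + 1 := ⟨p - 1, by omega⟩
    have := hθt q
    rw [hSθ] at this  -- wrong: hθt mentions sum over range (q+1) = range p
    exact this
  have hϑp0 : 0 < ϑ p := lt_of_le_of_lt (hθn p) hdiff
  have hθp0 : 0 < θ p := by linarith
  -- dyadic forms
  obtain ⟨a, ha⟩ : ∃ d : ℕ, ϑ p = ϑ 0 * (1/2:ℝ)^d := by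
    rcases hϑd p with h0 | h
    · exact absurd h0 hϑp0.ne'
    · exact h
  obtain ⟨b, hb⟩ : ∃ d : ℕ, θ p = ϑ 0 * (1/2:ℝ)^d := by
    rcases hθd p with h0 | h
    · exact absurd h0 hθp0.ne'
    · rw [← h00] at h; exact h
  -- b = a + 1
  have hba : b = a + 1 := by
    have hlt : (ϑ 0) * (1/2:ℝ)^b < (ϑ 0) * (1/2:ℝ)^a := by rw [← ha, ← hb]; exact hdiff
    have h1 : (1/2:ℝ)^b < (1/2:ℝ)^a := lt_of_mul_lt_mul_left hlt hx0.le
    have hab : a < b := by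
      by_contra hcon
      exact absurd h1 (not_lt.2 (pow_le_pow_of_le_one (by norm_num) (by norm_num) (not_lt.1 hcon)))
    have h2 : ϑ p / 2 ≤ θ p := by linarith
    have h3 : (1/2:ℝ)^(a+1) ≤ (1/2:ℝ)^b := by
      have : ϑ 0 * ((1/2:ℝ)^a * (1/2)) ≤ ϑ 0 * (1/2:ℝ)^b := by
        rw [← mul_assoc, ← ha, ← hb]; linarith
      have := le_of_mul_le_mul_left this hx0
      rw [pow_succ]; exact this
    have hba' : b ≤ a + 1 := by
      by_contra hcon
      have h4 : (1/2:ℝ)^b ≤ (1/2:ℝ)^(a+2) :=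
        pow_le_pow_of_le_one (by norm_num) (by norm_num) (by omega)
      have hpa : (0:ℝ) < (1/2:ℝ)^a := by positivity
      rw [pow_succ, pow_succ] at h4
      rw [pow_succ] at h3
      linarith
    omega
  have hθϑ : θ p = ϑ p / 2 := by
    rw [hb, ha, hba, pow_succ]; ring
  have hT : 1 - S = ϑ p := by
    have : 1 - S ≤ ϑ p := by rw [hθϑ] at hTθp; linarith
    linarith
  constructor
  · -- ϑ tail is zero
    have h0 : ϑ (p+1) = 0 := by
      have := hϑ1 (p+2)
      rw [Finset.sum_range_succ, Finset.sum_range_succ] at this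
      have h1 : ϑ (p+1) ≤ 0 := by
        have : S + ϑ p + ϑ (p+1) ≤ 1 := by exact_mod_cast this
        linarith
      linarith [hϑn (p+1)]
    intro j
    induction j with
    | zero => simpa using h0
    | succ j ih =>
      have h1 : ϑ (p+1+j+1) ≤ ϑ (p+1+j) / 2 := hϑs (p+1+j)
      have h2 : (0:ℝ) ≤ ϑ (p+1+(j+1)) := hϑn _
      have he : p+1+(j+1) = p+1+j+1 := by omega
      rw [he]
      rw [ih] at h1
      linarith [hϑn (p+1+j+1)]
  · -- θ tail geometric, with partial sum invariant
    have key : ∀ j, θ (p+j) = ϑ p / 2^(j+1) ∧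
        ∑ k ∈ Finset.range (p+j+1), θ k = 1 - ϑ p / 2^(j+1) := by
      intro j
      induction j with
      | zero =>
        constructor
        · show θ (p + 0) = ϑ p / 2 ^ (0 + 1)
          norm_num [hθϑ]
        · show ∑ k ∈ Finset.range (p+0+1), θ k = 1 - ϑ p / 2 ^ (0+1)
          rw [show p+0+1 = p+1 from rfl, Finset.sum_range_succ, hSθ, hθϑ]
          norm_num
          linarith [hT]
      | succ j ih =>
        obtain ⟨ih1, ih2⟩ := ih
        have ht := hθt (p+j+1-1+1-1+1)  -- want at index p+j+1? tail_le with j := p+j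
        have ht' := hθt (p+j)
        -- 1 - ∑ range (p+j+1) θ ≤ 2 θ (p+j+1)
        have hlow : ϑ p / 2^(j+2) ≤ θ (p+j+1) := by
          rw [ih2] at ht'
          have : ϑ p / 2^(j+1) ≤ 2 * θ (p+j+1) := by linarith
          rw [show ((2:ℝ)^(j+2)) = 2^(j+1) * 2 by ring]
          rw [div_mul_eq_div_div]
          linarith
        have hhigh : θ (p+j+1) ≤ ϑ p / 2^(j+2) := by
          have := hθs (p+j)
          rw [ih1] at this
          rw [show ((2:ℝ)^(j+2)) = 2^(j+1) * 2 by ring, div_mul_eq_div_div]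
          exact this
        have heq : θ (p+(j+1)) = ϑ p / 2^(j+1+1) := by
          rw [show p+(j+1) = p+j+1 by omega, show (j+1+1) = j+2 by omega]
          linarith
        refine ⟨heq, ?_⟩
        rw [show p+(j+1)+1 = (p+j+1)+1 by omega, Finset.sum_range_succ, ih2,
          show p+j+1 = p+(j+1) by omega, heq]
        rw [show ((2:ℝ)^(j+1+1)) = 2^(j+1) * 2 by ring]
        field_simp
        ring
    exact fun j => (key j).1

lemma hasSum_linear_geo (A B q : ℝ) (h0 : 0 ≤ q) (h1 : q < 1) :
    HasSum (fun j : ℕ => (A + B * j) * q ^ j) (A / (1-q) + B * (q/(1-q)^2)) := by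
  have hg : HasSum (fun j : ℕ => q ^ j) (1-q)⁻¹ := hasSum_geometric_of_lt_one h0 h1
  have hc : HasSum (fun j : ℕ => (j:ℝ) * q ^ j) (q/(1-q)^2) :=
    hasSum_coe_mul_geometric_of_norm_lt_one
      (by rw [Real.norm_eq_abs, abs_of_nonneg h0]; exact h1)
  have h := (hg.mul_left A).add (hc.mul_left B)
  have e : (fun j : ℕ => A * q^j + B * ((j:ℝ) * q^j)) = fun j : ℕ => (A + B*j)*q^j :=
    funext fun j => by ring
  have hv : A/(1-q) + B*(q/(1-q)^2) = A*(1-q)⁻¹ + B*(q/(1-q)^2) := by rw [div_eq_mul_inv]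
  rw [hv]
  exact e ▸ h

lemma hasSum_linear_geo' (A B q V : ℝ) (h0 : 0 ≤ q) (h1 : q < 1)
    (hV : A / (1-q) + B * (q/(1-q)^2) = V) :
    HasSum (fun j : ℕ => (A + B * j) * q ^ j) V := hV ▸ hasSum_linear_geo A B q h0 h1

lemma hasSum_geo_succ (q : ℝ) (h0 : 0 ≤ q) (h1 : q < 1) :
    HasSum (fun j : ℕ => q ^ (j+1)) (q / (1-q)) := by
  have hg : HasSum (fun j : ℕ => q ^ j) (1-q)⁻¹ := hasSum_geometric_of_lt_one h0 h1
  have h := hg.mul_left q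
  have e : (fun j : ℕ => q * q^j) = fun j : ℕ => q^(j+1) := funext fun j => (pow_succ' q j).symm
  have hv : q/(1-q) = q * (1-q)⁻¹ := by rw [div_eq_mul_inv]
  rw [hv]
  exact e ▸ h

lemma hasSum_half_tail (c : ℝ) : HasSum (fun i : ℕ => c / 2^(i+1)) c := by
  have h := (hasSum_geo_succ (1/2) (by norm_num) (by norm_num)).mul_left c
  have e : (fun i : ℕ => c * (1/2:ℝ)^(i+1)) = fun i : ℕ => c / 2^(i+1) :=
    funext fun i => by rw [div_pow, one_pow, mul_one_div]
  have h2 : HasSum (fun i : ℕ => c/2^(i+1)) (c * ((1/2:ℝ)/(1-1/2))) := e ▸ h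
  convert h2 using 1
  norm_num

lemma tsum_split_tail (F : ℕ → ℝ) (p : ℕ) (V : ℝ)
    (h : HasSum (fun j : ℕ => F (p + j)) V) :
    (∑' n, F n) = ∑ i ∈ Finset.range p, F i + V := by
  have h2 : HasSum (fun j : ℕ => F (j + p)) V := by
    have e : (fun j : ℕ => F (p + j)) = fun j : ℕ => F (j + p) := funext fun j => by rw [add_comm]
    exact e ▸ h
  have hs : Summable F := (summable_nat_add_iff p).1 h2.summable
  rw [← hs.sum_add_tsum_nat_add p, h2.tsum_eq]

lemma log_div_pow (t : ℝ) (ht : 0 < t) (j : ℕ) :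
    Real.log (t/2^(j+1)) = Real.log t - (j+1) * Real.log 2 := by
  rw [Real.log_div ht.ne' (by positivity), Real.log_pow]
  push_cast; ring

lemma log_four : Real.log 4 = 2 * Real.log 2 := by
  rw [show (4:ℝ) = 2^2 by norm_num, Real.log_pow]; push_cast; ring

lemma pow_two_sq (j : ℕ) : ((2:ℝ)^(j+1))^2 = 4 * 4^j := by
  rw [← pow_mul, show (j+1)*2 = 2 + 2*j by ring, pow_add, pow_mul]
  norm_num

lemma theta_sq (t : ℝ) (j : ℕ) : (t/2^(j+1))^2 = (t^2/4) * (1/4:ℝ)^j := by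
  rw [div_pow, pow_two_sq, one_div, inv_pow]
  ring


lemma rpow_pow_swap (x : ℝ) (hx : 0 ≤ x) (a : ℝ) (n : ℕ) :
    ((x^n : ℝ))^a = ((x^a)^n : ℝ) := by
  rw [← Real.rpow_natCast x n, ← Real.rpow_mul hx, mul_comm, Real.rpow_mul hx,
    Real.rpow_natCast]


lemma compute (ϑ θ : ℕ → ℝ) (p : ℕ) (t : ℝ) (ht : 0 < t)
    (hpre : ∀ k, k < p → ϑ k = θ k) (hϑp : ϑ p = t)
    (hϑ0 : ∀ j, ϑ (p+1+j) = 0) (hθg : ∀ j, θ (p+j) = t / 2^(j+1)) :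
    Kinf ϑ = Kinf θ ∧ Rinf ϑ = Rinf θ ∧ ∀ s : ℝ, -1 < s → Hinf ϑ s = Hinf θ s := by
  have ht2 : ∀ j:ℕ, (0:ℝ) < t/2^(j+1) := fun j => by positivity
  have hϑzero : ∀ n, p+1 ≤ n → ϑ n = 0 := fun n hn => by
    have h1 : n = p+1+(n-p-1) := by omega
    rw [h1]; exact hϑ0 _
  have hhalf : ∀ j : ℕ, t/2^(j+1) = (t/2)*(1/2:ℝ)^j := by
    intro j; rw [one_div, inv_pow]; ring
  -- tails
  have tailϑ_ge : ∀ n, p ≤ n → (∑' i, ϑ (n+1+i)) = 0 := by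
    intro n hn
    have h1 : ∀ i:ℕ, ϑ (n+1+i) = (0:ℝ) := fun i => hϑzero _ (by omega)
    rw [tsum_congr h1, tsum_zero]
  have tailθ_hs : ∀ j:ℕ, HasSum (fun i : ℕ => θ (p+j+1+i)) (t/2^(j+1)) := by
    intro j
    have e : (fun i : ℕ => θ (p+j+1+i)) = fun i : ℕ => (t/2^(j+1)) / 2^(i+1) := by
      funext i
      have h1 : p+j+1+i = p + (j+1+i) := by omega
      rw [h1, hθg, div_div, ← pow_add]
      have h2 : j+1+i+1 = (j+1)+(i+1) := by omega
      rw [h2]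
    exact e ▸ hasSum_half_tail _
  have tailθ_eq : ∀ j:ℕ, (∑' i, θ (p+j+1+i)) = t/2^(j+1) := fun j => (tailθ_hs j).tsum_eq
  have tail_pre : ∀ n, n < p → (∑' i, ϑ (n+1+i)) = ∑' i, θ (n+1+i) := by
    intro n hn
    have hϑside : (∑' i, ϑ (n+1+i)) = ∑ i ∈ Finset.range (p-n), ϑ (n+1+i) := by
      refine tsum_eq_sum ?_
      intro b hb
      have hb' : p - n ≤ b := by simpa using hb
      exact hϑzero _ (by omega)
    have hθside : (∑' i, θ (n+1+i)) = ∑ i ∈ Finset.range (p-n-1), θ (n+1+i) + t := by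
      refine tsum_split_tail (fun i => θ (n+1+i)) (p-n-1) t ?_
      have e : (fun i : ℕ => θ (n+1+(p-n-1+i))) = fun i : ℕ => t / 2^(i+1) := by
        funext i
        have h1 : n+1+(p-n-1+i) = p + i := by omega
        rw [h1, hθg]
      exact e ▸ hasSum_half_tail t
    rw [hϑside, hθside]
    have hpn : p - n = (p-n-1)+1 := by omega
    rw [hpn, Finset.sum_range_succ]
    congr 1
    · exact Finset.sum_congr rfl (fun i hi => hpre _ (by
        have := Finset.mem_range.1 hi; omega))
    · have h1 : n+1+(p-n-1) = p := by omega
      rw [h1, hϑp]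
  refine ⟨?_, ?_, ?_⟩
  · -- K
    unfold Kinf
    set L := Real.log 2 with hL
    have s1ϑ : (∑' n, ϑ n^2 * Real.log (ϑ n/4))
        = ∑ n ∈ Finset.range (p+1), ϑ n^2 * Real.log (ϑ n/4) := by
      refine tsum_eq_sum ?_
      intro b hb
      have hb' : p+1 ≤ b := by simpa using hb
      rw [hϑzero b hb']
      norm_num
    have s1θhs : HasSum (fun j : ℕ => θ (p+j)^2 * Real.log (θ (p+j)/4))
        ((t^2/3)*Real.log t - (10/9)*t^2*L) := by
      have e : (fun j : ℕ => θ (p+j)^2 * Real.log (θ (p+j)/4))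
          = fun j : ℕ => ((t^2/4)*(Real.log t - 3*L) + (-(t^2/4)*L) * j) * (1/4:ℝ)^j := by
        funext j
        rw [hθg j, theta_sq, Real.log_div (ht2 j).ne' (by norm_num), log_div_pow t ht j,
          hL, log_four]
        push_cast; ring
      exact e ▸ hasSum_linear_geo' _ _ _ _ (by norm_num) (by norm_num) (by norm_num; ring)
    have s1θ := tsum_split_tail (fun n => θ n^2 * Real.log (θ n/4)) p _ s1θhs
    have s2ϑ : (∑' n, (∑' i, ϑ (n+1+i)) * (ϑ n * Real.log (ϑ n)))
        = ∑ n ∈ Finset.range p, (∑' i, ϑ (n+1+i)) * (ϑ n * Real.log (ϑ n)) := by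
      refine tsum_eq_sum ?_
      intro b hb
      have hb' : p ≤ b := by simpa using hb
      rw [tailϑ_ge b hb', zero_mul]
    have s2θhs : HasSum (fun j : ℕ => (∑' i, θ (p+j+1+i)) * (θ (p+j) * Real.log (θ (p+j))))
        ((t^2/3)*(Real.log t - L) - (1/9)*t^2*L) := by
      have e : (fun j : ℕ => (∑' i, θ (p+j+1+i)) * (θ (p+j) * Real.log (θ (p+j))))
          = fun j : ℕ => ((t^2/4)*(Real.log t - L) + (-(t^2/4)*L) * j) * (1/4:ℝ)^j := by
        funext j
        rw [tailθ_eq j, hθg j, log_div_pow t ht j,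
          show (t/2^(j+1)) * ((t/2^(j+1)) * (Real.log t - (↑j+1)*L))
            = (t/2^(j+1))^2 * (Real.log t - (↑j+1)*L) by ring, theta_sq]
        push_cast; ring
      exact e ▸ hasSum_linear_geo' _ _ _ _ (by norm_num) (by norm_num) (by norm_num; ring)
    have s2θ := tsum_split_tail
      (fun n => (∑' i, θ (n+1+i)) * (θ n * Real.log (θ n))) p _ s2θhs
    rw [s1ϑ, Finset.sum_range_succ, s1θ, s2ϑ, s2θ]
    have e1 : ∑ n ∈ Finset.range p, ϑ n^2 * Real.log (ϑ n/4)
        = ∑ n ∈ Finset.range p, θ n^2 * Real.log (θ n/4) :=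
      Finset.sum_congr rfl (fun n hn => by rw [hpre n (Finset.mem_range.1 hn)])
    have e2 : ∑ n ∈ Finset.range p, (∑' i, ϑ (n+1+i)) * (ϑ n * Real.log (ϑ n))
        = ∑ n ∈ Finset.range p, (∑' i, θ (n+1+i)) * (θ n * Real.log (θ n)) :=
      Finset.sum_congr rfl (fun n hn => by
        rw [tail_pre n (Finset.mem_range.1 hn), hpre n (Finset.mem_range.1 hn)])
    rw [e1, e2, hϑp, Real.log_div ht.ne' (by norm_num), log_four, ← hL]
    ring
  · -- R
    unfold Rinf
    set L := Real.log 2 with hL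
    have s1ϑ : (∑' n : ℕ, (n:ℝ) * ϑ n) = ∑ n ∈ Finset.range (p+1), (n:ℝ) * ϑ n := by
      refine tsum_eq_sum ?_
      intro b hb
      have hb' : p+1 ≤ b := by simpa using hb
      rw [hϑzero b hb', mul_zero]
    have s2ϑ : (∑' n, ϑ n * Real.log (ϑ n)) = ∑ n ∈ Finset.range (p+1), ϑ n * Real.log (ϑ n) := by
      refine tsum_eq_sum ?_
      intro b hb
      have hb' : p+1 ≤ b := by simpa using hb
      rw [hϑzero b hb']
      norm_num
    have s1θhs : HasSum (fun j : ℕ => ((p+j:ℕ):ℝ) * θ (p+j)) ((p:ℝ)*t + t) := by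
      have e : (fun j : ℕ => ((p+j:ℕ):ℝ) * θ (p+j))
          = fun j : ℕ => ((p:ℝ)*(t/2) + (t/2) * j) * (1/2:ℝ)^j := by
        funext j
        rw [hθg j, hhalf j]
        push_cast; ring
      exact e ▸ hasSum_linear_geo' _ _ _ _ (by norm_num) (by norm_num) (by norm_num; ring)
    have s1θ := tsum_split_tail (fun n => (n:ℝ) * θ n) p _ s1θhs
    have s2θhs : HasSum (fun j : ℕ => θ (p+j) * Real.log (θ (p+j)))
        (t*Real.log t - 2*t*L) := by
      have e : (fun j : ℕ => θ (p+j) * Real.log (θ (p+j)))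
          = fun j : ℕ => ((t/2)*(Real.log t - L) + (-(t/2)*L) * j) * (1/2:ℝ)^j := by
        funext j
        rw [hθg j, log_div_pow t ht j, hhalf j]
        push_cast; ring
      exact e ▸ hasSum_linear_geo' _ _ _ _ (by norm_num) (by norm_num) (by norm_num; ring)
    have s2θ := tsum_split_tail (fun n => θ n * Real.log (θ n)) p _ s2θhs
    rw [s1ϑ, s2ϑ, Finset.sum_range_succ, Finset.sum_range_succ, s1θ, s2θ]
    have e1 : ∑ n ∈ Finset.range p, (n:ℝ) * ϑ n = ∑ n ∈ Finset.range p, (n:ℝ) * θ n :=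
      Finset.sum_congr rfl (fun n hn => by rw [hpre n (Finset.mem_range.1 hn)])
    have e2 : ∑ n ∈ Finset.range p, ϑ n * Real.log (ϑ n)
        = ∑ n ∈ Finset.range p, θ n * Real.log (θ n) :=
      Finset.sum_congr rfl (fun n hn => by rw [hpre n (Finset.mem_range.1 hn)])
    rw [e1, e2, hϑp]
    ring
  · -- H
    intro s hs
    have hs1 : (0:ℝ) < s + 1 := by linarith
    unfold Hinf
    set q := (1/2:ℝ)^(s+1) with hq
    have hq0 : 0 < q := Real.rpow_pos_of_pos (by norm_num) _
    have hq1 : q < 1 := Real.rpow_lt_one (by norm_num) (by norm_num) hs1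
    have hpow : ∀ j : ℕ, (t/2^(j+1) : ℝ) ^ (s+1) = t^(s+1) * q^(j+1) := by
      intro j
      rw [show (t/2^(j+1) : ℝ) = t * (1/2:ℝ)^(j+1) by
        rw [div_pow, one_pow, mul_one_div]]
      rw [Real.mul_rpow ht.le (by positivity)]
      congr 1
      rw [hq, rpow_pow_swap (1/2) (by norm_num) (s+1) (j+1)]
    have aϑ : (∑' n, ϑ n ^ (s+1)) = ∑ n ∈ Finset.range (p+1), ϑ n ^ (s+1) := by
      refine tsum_eq_sum ?_
      intro b hb
      have hb' : p+1 ≤ b := by simpa using hb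
      rw [hϑzero b hb', Real.zero_rpow hs1.ne']
    have bϑ : (∑' n, ϑ n ^ s * ∑' i, ϑ (n+1+i))
        = ∑ n ∈ Finset.range p, ϑ n ^ s * ∑' i, ϑ (n+1+i) := by
      refine tsum_eq_sum ?_
      intro b hb
      have hb' : p ≤ b := by simpa using hb
      rw [tailϑ_ge b hb', mul_zero]
    have aθhs : HasSum (fun j : ℕ => θ (p+j) ^ (s+1)) (t^(s+1) * (q/(1-q))) := by
      have e : (fun j : ℕ => θ (p+j) ^ (s+1)) = fun j : ℕ => t^(s+1) * q^(j+1) := by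
        funext j
        rw [hθg j, hpow j]
      exact e ▸ (hasSum_geo_succ q hq0.le hq1).mul_left _
    have aθ := tsum_split_tail (fun n => θ n ^ (s+1)) p _ aθhs
    have bθhs : HasSum (fun j : ℕ => θ (p+j) ^ s * ∑' i, θ (p+j+1+i)) (t^(s+1) * (q/(1-q))) := by
      have e : (fun j : ℕ => θ (p+j) ^ s * ∑' i, θ (p+j+1+i))
          = fun j : ℕ => t^(s+1) * q^(j+1) := by
        funext j
        rw [tailθ_eq j, hθg j, ← Real.rpow_add_one (ht2 j).ne' s, hpow j]
      exact e ▸ (hasSum_geo_succ q hq0.le hq1).mul_left _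
    have bθ := tsum_split_tail (fun n => θ n ^ s * ∑' i, θ (n+1+i)) p _ bθhs
    rw [aϑ, Finset.sum_range_succ, aθ, bϑ, bθ]
    have e1 : ∑ n ∈ Finset.range p, ϑ n ^ (s+1) = ∑ n ∈ Finset.range p, θ n ^ (s+1) :=
      Finset.sum_congr rfl (fun n hn => by rw [hpre n (Finset.mem_range.1 hn)])
    have e2 : ∑ n ∈ Finset.range p, ϑ n ^ s * ∑' i, ϑ (n+1+i)
        = ∑ n ∈ Finset.range p, θ n ^ s * ∑' i, θ (n+1+i) :=
      Finset.sum_congr rfl (fun n hn => by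
        rw [tail_pre n (Finset.mem_range.1 hn), hpre n (Finset.mem_range.1 hn)])
    rw [e1, e2, hϑp]
    -- remains: (P + t^{s+1}) + 2(2^s-1) Pb = (P + V) + 2(2^s-1)(Pb + V)
    have h2s : (1/2:ℝ) < (2:ℝ)^s := by
      rw [show (1/2:ℝ) = (2:ℝ)^(-1:ℝ) by
        rw [Real.rpow_neg_one]; norm_num]
      exact Real.rpow_lt_rpow_left_iff (by norm_num) |>.2 hs
    have h2pos : (0:ℝ) < (2:ℝ)^s := Real.rpow_pos_of_pos (by norm_num) s
    have h2 : (2:ℝ)^(s+1) = 2^s * 2 := Real.rpow_add_one (by norm_num) s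
    have hqw : q = (2*(2:ℝ)^s)⁻¹ := by
      have hmul : q * (2:ℝ)^(s+1) = 1 := by
        rw [hq, ← Real.mul_rpow (by norm_num) (by norm_num)]
        norm_num
      have := eq_inv_of_mul_eq_one_left hmul
      rw [this, h2, mul_comm]
    have hw0 : (2*(2:ℝ)^s) ≠ 0 := by positivity
    have hww : q/(1-q) = 1/(2*(2:ℝ)^s - 1) := by
      have hsub : (1 : ℝ) - (2*(2:ℝ)^s)⁻¹ = (2*(2:ℝ)^s - 1)/(2*(2:ℝ)^s) := by
        field_simp
      rw [hqw, hsub, div_div_eq_mul_div, inv_mul_cancel₀ hw0]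
    rw [hww]
    have hden : 2*(2:ℝ)^s - 1 ≠ 0 := by nlinarith
    field_simp
    ring

end Aux

theorem stmt14 (x : ℝ) (hx : x ∈ Set.Icc (1 / 2 : ℝ) 1)
    (ϑ θ : ℕ → ℝ) (hϑ : ϑ ∈ Sset) (hθ : θ ∈ Sset) (hne : ϑ ≠ θ)
    (h1 : ϑ 0 = x) (h2 : θ 0 = x) :
    Kinf ϑ = Kinf θ ∧ Rinf ϑ = Rinf θ ∧ ∀ s : ℝ, -1 < s → Hinf ϑ s = Hinf θ s := by
  have hxϑ : (1/2:ℝ) ≤ ϑ 0 := by rw [h1]; exact hx.1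
  have hxθ : (1/2:ℝ) ≤ θ 0 := by rw [h2]; exact hx.1
  have h00 : ϑ 0 = θ 0 := by rw [h1, h2]
  have hex : ∃ k, ϑ k ≠ θ k := by
    by_contra hcon
    push_neg at hcon
    exact hne (funext hcon)
  set p := Nat.find hex with hpdef
  have hd : ϑ p ≠ θ p := Nat.find_spec hex
  have hpre : ∀ k, k < p → ϑ k = θ k := fun k hk => not_not.1 (Nat.find_min hex hk)
  have hp1 : 1 ≤ p := by
    rcases Nat.eq_zero_or_pos p with h0 | h0
    · exact absurd (h0 ▸ h00) hd
    · exact h0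
  rcases hd.lt_or_gt with hlt | hgt
  · -- ϑ p < θ p : swap roles
    have hst := structure_lemma θ ϑ (Sset.nonneg hθ) (Sset.succ_le hθ) (Sset.psum_le_one hθ)
      (Sset.tail_le hθ) (Sset.dyadic hθ hxθ)
      (Sset.nonneg hϑ) (Sset.succ_le hϑ) (Sset.psum_le_one hϑ)
      (Sset.tail_le hϑ) (Sset.dyadic hϑ hxϑ)
      hxθ h00.symm p hp1 (fun k hk => (hpre k hk).symm) hlt
    have ht : 0 < θ p := lt_of_le_of_lt (Sset.nonneg hϑ p) hlt
    have hc := compute θ ϑ p (θ p) ht (fun k hk => (hpre k hk).symm) rfl hst.1 hst.2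
    exact ⟨hc.1.symm, hc.2.1.symm, fun s hs => (hc.2.2 s hs).symm⟩
  · -- θ p < ϑ p
    have hst := structure_lemma ϑ θ (Sset.nonneg hϑ) (Sset.succ_le hϑ) (Sset.psum_le_one hϑ)
      (Sset.tail_le hϑ) (Sset.dyadic hϑ hxϑ)
      (Sset.nonneg hθ) (Sset.succ_le hθ) (Sset.psum_le_one hθ)
      (Sset.tail_le hθ) (Sset.dyadic hθ hxθ)
      hxϑ h00 p hp1 hpre hgt
    have ht : 0 < ϑ p := lt_of_le_of_lt (Sset.nonneg hθ p) hgt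
    exact compute ϑ θ p (ϑ p) ht hpre rfl hst.1 hst.2

end GreedyEnergy
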